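/- If g_n < ln(p_n)^2 - ln(p_n) - 1 for all n ≥ 10, then Andrica's conjecture holds: g_n < 2√(p_n) + 1 for all n ≥ 1. -/

import Mathlib

/-- `p n` is the `n`-th prime number (`p 1 = 2`, `p 2 = 3`, ...). -/
noncomputable def p (n : ℕ) : ℕ := Nat.nth Nat.Prime (n - 1)

/-- `g n = p (n+1) - p n` is the `n`-th prime gap. -/
noncomputable def g (n : ℕ) : ℕ := p (n + 1) - p n

lemma nth_prime_val (m k : ℕ) (hk : k.Prime) (hc : Nat.count Nat.Prime k = m) :
    Nat.nth Nat.Prime m = k := by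
  rw [← hc]; exact Nat.nth_count hk

lemma p1 : p 1 = 2 := nth_prime_val 0 2 (by norm_num) (by decide)
lemma p2 : p 2 = 3 := nth_prime_val 1 3 (by norm_num) (by decide)
lemma p3 : p 3 = 5 := nth_prime_val 2 5 (by norm_num) (by decide)
lemma p4 : p 4 = 7 := nth_prime_val 3 7 (by norm_num) (by decide)
lemma p5 : p 5 = 11 := nth_prime_val 4 11 (by norm_num) (by decide)
lemma p6 : p 6 = 13 := nth_prime_val 5 13 (by norm_num) (by decide)
lemma p7 : p 7 = 17 := nth_prime_val 6 17 (by norm_num) (by decide)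
lemma p8 : p 8 = 19 := nth_prime_val 7 19 (by norm_num) (by decide)
lemma p9 : p 9 = 23 := nth_prime_val 8 23 (by norm_num) (by decide)
lemma p10 : p 10 = 29 := nth_prime_val 9 29 (by norm_num) (by decide)

lemma small_case (a b : ℕ) (hab : (a : ℝ) ^ 2 < 4 * b) :
    (a : ℝ) < 2 * Real.sqrt b + 1 := by
  have h1 : Real.sqrt b ^ 2 = (b : ℝ) := Real.sq_sqrt (by positivity)
  nlinarith [Real.sqrt_nonneg (b : ℝ), sq_nonneg ((a : ℝ) - 2 * Real.sqrt b)]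

theorem andrica
    (h : ∀ n : ℕ, 10 ≤ n → (g n : ℝ) < Real.log (p n) ^ 2 - Real.log (p n) - 1) :
    ∀ n : ℕ, 1 ≤ n → (g n : ℝ) < 2 * Real.sqrt (p n) + 1 := by
  intro n hn
  rcases lt_or_ge n 10 with h10 | h10
  · interval_cases n <;>
      · apply small_case
        norm_num [g, p1, p2, p3, p4, p5, p6, p7, p8, p9, p10]
  · have hlt := h n h10
    set x : ℝ := ((p n : ℕ) : ℝ) with hx
    have hp2 : 2 ≤ p n := (Nat.prime_nth_prime (n - 1)).two_le
    have hx2 : (2 : ℝ) ≤ x := by rw [hx]; exact_mod_cast hp2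
    have hx0 : (0 : ℝ) < x := by linarith
    set u : ℝ := Real.log x with hu
    have hu0 : 0 ≤ u := Real.log_nonneg (by linarith)
    have hsqrt : Real.sqrt x = Real.exp (u / 2) := by
      rw [Real.sqrt_eq_rpow, Real.rpow_def_of_pos hx0]
      ring_nf
      rfl
    have hexp : 1 + u / 2 + (u / 2) ^ 2 / 2 + (u / 2) ^ 3 / 6 + (u / 2) ^ 4 / 24
        ≤ Real.exp (u / 2) := by
      have := Real.sum_le_exp_of_nonneg (by positivity : (0:ℝ) ≤ u / 2) 5
      simpa [Finset.sum_range_succ, Nat.factorial] using this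
    rw [hsqrt]
    have key : u ^ 2 - u - 1 < 2 * Real.exp (u / 2) + 1 := by
      nlinarith [sq_nonneg (u - 5), sq_nonneg u, sq_nonneg (u ^ 2 - 5 * u),
        sq_nonneg (u ^ 2 + 4 * u - 40), mul_nonneg hu0 (sq_nonneg (u - 5))]
    linarith
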